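/- Let Π = ⟨V, A, I, G⟩ be a STRIPS planning task, P ⊆ V a pattern, and B ∈ ℕ. Define Φ_PDB as the set of state–cost pairs ⟨s, c⟩ with s ⊆ V, c ∈ ℕ, such that c + d(α(s)) ≥ B holds in ℕ∞. If ⟨s, c⟩ ∈ Φ_PDB and action a ∈ A is applicable in s, then ⟨s⟦a⟧, c + cost(a)⟩ ∈ Φ_PDB, i.e., (c + cost(a)) + d(α(s⟦a⟧)) ≥ B in ℕ∞. -/

import Mathlib

/-- A STRIPS action over variable type `V`: preconditions, add effects,
delete effects (disjoint from add effects), and a natural-number cost. -/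
structure StripsAction (V : Type*) where
  pre : Set V
  add : Set V
  del : Set V
  cost : ℕ
  del_disj : Disjoint del add

variable {V : Type*}

/-- An action is applicable in a state if its preconditions hold. -/
def StripsAction.applicable (a : StripsAction V) (s : Set V) : Prop := a.pre ⊆ s

/-- The successor state `s⟦a⟧ = (s \ del(a)) ∪ add(a)`. -/
def StripsAction.app (a : StripsAction V) (s : Set V) : Set V := (s \ a.del) ∪ a.add

/-- Result of applying a sequence of actions. -/
def appSeq : Set V → List (StripsAction V) → Set V
  | s, [] => s
  | s, a :: π => appSeq (a.app s) π

/-- A sequence of actions is successively applicable from a state. -/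
def applicableSeq : Set V → List (StripsAction V) → Prop
  | _, [] => True
  | s, a :: π => a.applicable s ∧ applicableSeq (a.app s) π

/-- Cost of an action sequence. -/
def seqCost (π : List (StripsAction V)) : ℕ := (π.map StripsAction.cost).sum

/-- A STRIPS planning task: a set of actions, initial state, and goal. -/
structure StripsTask (V : Type*) where
  acts : Set (StripsAction V)
  init : Set V
  goal : Set V

/-- `π` is a plan for state `s`: all its actions belong to the task, it is
applicable from `s`, and the resulting state satisfies the goal. -/
def StripsTask.IsPlanFrom (T : StripsTask V) (s : Set V) (π : List (StripsAction V)) : Prop :=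
  (∀ a ∈ π, a ∈ T.acts) ∧ applicableSeq s π ∧ T.goal ⊆ appSeq s π

/-- A plan for the task is a plan for its initial state. -/
def StripsTask.IsPlan (T : StripsTask V) (π : List (StripsAction V)) : Prop := T.IsPlanFrom T.init π

/-- The abstract action `a^α` induced by pattern `P`. -/
def StripsAction.abs (a : StripsAction V) (P : Set V) : StripsAction V where
  pre := a.pre ∩ P
  add := a.add ∩ P
  del := a.del ∩ P
  cost := a.cost
  del_disj := a.del_disj.mono Set.inter_subset_left Set.inter_subset_left

/-- The abstract task `⟨P, {a^α | a ∈ A}, sα, G ∩ P⟩`. -/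
def StripsTask.absTask (T : StripsTask V) (P : Set V) (sα : Set V) : StripsTask V where
  acts := (fun a => a.abs P) '' T.acts
  init := sα
  goal := T.goal ∩ P

/-- Abstract goal distance: infimum (in `ℕ∞`) of costs of abstract plans
for `sα` in the abstract task induced by pattern `P`. -/
noncomputable def absDist (T : StripsTask V) (P : Set V) (sα : Set V) : ℕ∞ :=
  sInf {c : ℕ∞ | ∃ π : List (StripsAction V), (T.absTask P sα).IsPlan π ∧ c = (seqCost π : ℕ∞)}

/-- `Vm` is an hmax value function for state `s`: variables in `s` have value 0,
and any other variable's value is the infimum over achievers `a` of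
`cost(a) + max_{p ∈ pre(a)} Vm(p)` (max over the empty set is 0,
infimum over the empty set is ∞). -/
def IsHmaxVal (T : StripsTask V) (s : Set V) (Vm : V → ℕ∞) : Prop :=
  (∀ v ∈ s, Vm v = 0) ∧
  ∀ v ∉ s, Vm v =
    sInf {c : ℕ∞ | ∃ a ∈ T.acts, v ∈ a.add ∧ c = (a.cost : ℕ∞) + sSup (Vm '' a.pre)}

lemma abs_app_eq (a : StripsAction V) (P s : Set V) :
    (a.abs P).app (s ∩ P) = a.app s ∩ P := by
  ext x
  simp only [StripsAction.app, StripsAction.abs, Set.mem_union, Set.mem_diff, Set.mem_inter_iff]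
  tauto

lemma absDist_le (T : StripsTask V) (P : Set V) (s : Set V)
    (a : StripsAction V) (ha : a ∈ T.acts) (happ : a.applicable s) :
    absDist T P (s ∩ P) ≤ (a.cost : ℕ∞) + absDist T P (a.app s ∩ P) := by
  set S := {c : ℕ∞ | ∃ π : List (StripsAction V),
    (T.absTask P (a.app s ∩ P)).IsPlan π ∧ c = (seqCost π : ℕ∞)} with hSdef
  by_cases hS : S.Nonempty
  · obtain ⟨π, hπ, hc⟩ := csInf_mem hS
    obtain ⟨hmemπ, happπ, hgoalπ⟩ := hπ
    have : absDist T P (s ∩ P) ≤ ((seqCost (a.abs P :: π) : ℕ) : ℕ∞) := by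
      apply sInf_le
      refine ⟨a.abs P :: π, ⟨?_, ?_, ?_⟩, rfl⟩
      · intro b hb
        rcases List.mem_cons.mp hb with rfl | hb
        · exact ⟨a, ha, rfl⟩
        · exact hmemπ b hb
      · refine ⟨?_, ?_⟩
        · intro x hx
          exact ⟨happ hx.1, hx.2⟩
        · show applicableSeq ((a.abs P).app ((T.absTask P (s ∩ P)).init)) π
          rw [show (T.absTask P (s ∩ P)).init = s ∩ P from rfl, abs_app_eq]
          exact happπ
      · show (T.absTask P (s ∩ P)).goal ⊆ appSeq ((a.abs P).app (s ∩ P)) π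
        rw [abs_app_eq]
        exact hgoalπ
    refine this.trans ?_
    have : (seqCost (a.abs P :: π) : ℕ∞) = (a.cost : ℕ∞) + (seqCost π : ℕ∞) := by
      simp [seqCost, StripsAction.abs]
    rw [this, ← hc]
    rfl
  · have : absDist T P (a.app s ∩ P) = ⊤ := by
      rw [absDist, ← hSdef, Set.not_nonempty_iff_eq_empty.mp hS, sInf_empty]
    rw [this, add_top]
    exact le_top

/-- Inductivity lemma for the PDB certificate: the set Φ_PDB of state–cost
pairs with `c + d(α(s)) ≥ B` in `ℕ∞` is closed under action application. -/
theorem stmt9 [Fintype V] (T : StripsTask V) (P : Set V) (B : ℕ) (s : Set V) (c : ℕ)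
    (hmem : (B : ℕ∞) ≤ (c : ℕ∞) + absDist T P (s ∩ P))
    (a : StripsAction V) (ha : a ∈ T.acts) (happ : a.applicable s) :
    (B : ℕ∞) ≤ ((c + a.cost : ℕ) : ℕ∞) + absDist T P (a.app s ∩ P) := by
  have key := absDist_le T P s a ha happ
  refine hmem.trans ?_
  calc (c : ℕ∞) + absDist T P (s ∩ P)
      ≤ (c : ℕ∞) + ((a.cost : ℕ∞) + absDist T P (a.app s ∩ P)) := add_le_add_right key _
    _ = ((c + a.cost : ℕ) : ℕ∞) + absDist T P (a.app s ∩ P) := by push_cast; ring
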